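/- If the subsets A_{s_1}, …, A_{s_m} cover the finite set A and an optimal cover uses OPT subsets, then the greedy set cover algorithm selects at most OPT·(1 + ln|A|) subsets (equivalently, at most H_{|A|}·OPT subsets, where H_n is the n-th harmonic number). -/

import Mathlib

/-- One run of the greedy set cover procedure: while some given subset intersects the
uncovered set `I`, pick a subset `s` maximizing the number `|I ∩ s|` of newly covered
elements, record the contribution `I ∩ s`, and remove it from `I`. -/
noncomputable def greedyCover {α : Type*} [DecidableEq α]
    (F : Finset (Finset α)) (I : Finset α) : List (Finset α) :=
  if h : ∃ s, s ∈ F ∧ (I ∩ s).Nonempty ∧ ∀ t ∈ F, (I ∩ t).card ≤ (I ∩ s).card then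
    let s := Classical.choose h
    (I ∩ s) :: greedyCover F (I \ s)
  else []
termination_by I.card
decreasing_by
  obtain ⟨-, hne, -⟩ := Classical.choose_spec h
  obtain ⟨a, ha⟩ := hne
  simp only [Finset.mem_inter] at ha
  exact Finset.card_lt_card ⟨Finset.sdiff_subset,
    fun hsub => (Finset.mem_sdiff.mp (hsub ha.1)).2 ha.2⟩

lemma greedyCover_empty {α : Type*} [DecidableEq α] (F : Finset (Finset α)) :
    greedyCover F ∅ = [] := by
  rw [greedyCover]
  simp

lemma greedy_aux {α : Type*} [DecidableEq α] (F G : Finset (Finset α)) (hGF : G ⊆ F) :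
    ∀ n (I : Finset α), I.card = n → (∀ a ∈ I, ∃ s ∈ G, a ∈ s) → I.Nonempty →
      ((greedyCover F I).length : ℝ) ≤ (G.card : ℝ) * Real.log I.card + 1 := by
  intro n
  induction n using Nat.strong_induction_on with
  | _ n ih =>
    intro I hcard hcov hne
    -- the greedy condition holds
    have hex : ∃ s, s ∈ F ∧ (I ∩ s).Nonempty ∧ ∀ t ∈ F, (I ∩ t).card ≤ (I ∩ s).card := by
      obtain ⟨a, ha⟩ := hne
      obtain ⟨t, htG, hat⟩ := hcov a ha
      have hFne : F.Nonempty := ⟨t, hGF htG⟩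
      obtain ⟨s, hsF, hmax⟩ := F.exists_max_image (fun u => (I ∩ u).card) hFne
      refine ⟨s, hsF, ?_, hmax⟩
      have h0 : 0 < (I ∩ t).card :=
        Finset.card_pos.mpr ⟨a, Finset.mem_inter.mpr ⟨ha, hat⟩⟩
      exact Finset.card_pos.mp (lt_of_lt_of_le h0 (hmax t (hGF htG)))
    rw [greedyCover, dif_pos hex]
    simp only [List.length_cons]
    obtain ⟨hsF, hsne, hsmax⟩ := Classical.choose_spec hex
    set s := Classical.choose hex with hs
    -- counting
    have hGne : G.Nonempty := by
      obtain ⟨a, ha⟩ := hne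
      obtain ⟨t, htG, -⟩ := hcov a ha
      exact ⟨t, htG⟩
    have hk1 : (1 : ℝ) ≤ G.card := by exact_mod_cast Finset.card_pos.mpr hGne
    have hkpos : (0 : ℝ) < G.card := lt_of_lt_of_le one_pos hk1
    have hsum : I.card ≤ ∑ t ∈ G, (I ∩ t).card := by
      calc I.card ≤ (G.biUnion (fun t => I ∩ t)).card := by
            apply Finset.card_le_card
            intro a ha
            obtain ⟨t, htG, hat⟩ := hcov a ha
            exact Finset.mem_biUnion.mpr ⟨t, htG, Finset.mem_inter.mpr ⟨ha, hat⟩⟩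
        _ ≤ ∑ t ∈ G, (I ∩ t).card := Finset.card_biUnion_le
    have hsum2 : ∑ t ∈ G, (I ∩ t).card ≤ G.card * (I ∩ s).card :=
      Finset.sum_le_card_nsmul G _ _ (fun t ht => hsmax t (hGF ht))
    have hIk : (I.card : ℝ) ≤ (G.card : ℝ) * ((I ∩ s).card : ℝ) := by
      exact_mod_cast le_trans hsum hsum2
    have hsd : ((I \ s).card : ℝ) = (I.card : ℝ) - ((I ∩ s).card : ℝ) := by
      have := Finset.card_sdiff_add_card_inter I s
      have h' : (I \ s).card + (I ∩ s).card = I.card := this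
      push_cast [← h']
      ring
    have hm1 : (1 : ℝ) ≤ I.card := by
      exact_mod_cast Finset.card_pos.mpr hne
    have hlogm : 0 ≤ Real.log I.card := Real.log_nonneg hm1
    rcases Finset.eq_empty_or_nonempty (I \ s) with hI' | hI'
    · rw [hI', greedyCover_empty]
      simp only [List.length_nil]
      push_cast
      nlinarith
    · -- recursive case
      have hlt : (I \ s).card < n := by
        rw [← hcard]
        obtain ⟨a, ha⟩ := hsne
        simp only [Finset.mem_inter] at ha
        exact Finset.card_lt_card ⟨Finset.sdiff_subset,
          fun hsub => (Finset.mem_sdiff.mp (hsub ha.1)).2 ha.2⟩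
      have hcov' : ∀ a ∈ I \ s, ∃ u ∈ G, a ∈ u := fun a ha =>
        hcov a (Finset.mem_sdiff.mp ha).1
      have hrec := ih _ hlt (I \ s) rfl hcov' hI'
      have hm'1 : (1 : ℝ) ≤ (I \ s).card := by
        exact_mod_cast Finset.card_pos.mpr hI'
      have hm'pos : (0 : ℝ) < (I \ s).card := lt_of_lt_of_le one_pos hm'1
      have hmle : ((I \ s).card : ℝ) ≤ (I.card : ℝ) * (1 - 1 / G.card) := by
        rw [hsd]
        have hc : (I.card : ℝ) / G.card ≤ ((I ∩ s).card : ℝ) := by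
          rw [div_le_iff₀ hkpos]
          nlinarith
        have : (I.card : ℝ) * (1 - 1 / G.card) = (I.card : ℝ) - (I.card : ℝ) / G.card := by
          field_simp
        rw [this]
        linarith
    -- 1 - 1/k > 0
      have h1k : (0 : ℝ) < 1 - 1 / G.card := by
        by_contra h
        push_neg at h
        have : (I.card : ℝ) * (1 - 1 / G.card) ≤ 0 := by
          apply mul_nonpos_of_nonneg_of_nonpos <;> linarith
        linarith
      have hlog1 : Real.log ((I \ s).card) ≤ Real.log I.card + Real.log (1 - 1 / G.card) := by
        rw [← Real.log_mul (by linarith) (ne_of_gt h1k)]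
        exact Real.log_le_log hm'pos hmle
      have hlog2 : Real.log (1 - 1 / G.card) ≤ -(1 / G.card) := by
        have := Real.log_le_sub_one_of_pos h1k
        linarith
      have hkey : (G.card : ℝ) * Real.log ((I \ s).card) + 1 ≤ (G.card : ℝ) * Real.log I.card := by
        have h3 : (G.card : ℝ) * Real.log ((I \ s).card) ≤
            (G.card : ℝ) * (Real.log I.card - 1 / G.card) := by
          apply mul_le_mul_of_nonneg_left _ (le_of_lt hkpos)
          linarith
        have h4 : (G.card : ℝ) * (Real.log I.card - 1 / G.card)
            = (G.card : ℝ) * Real.log I.card - 1 := by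
          field_simp
        linarith
      push_cast
      linarith

/-- Greedy set cover approximation guarantee: if some `OPT` of the given subsets cover `A`
(here: any cover `G ⊆ F` of `A`, in particular an optimal one), then greedy selects at
most `OPT·(1 + ln |A|)` subsets. -/
theorem greedyCover_approx {α : Type*} [DecidableEq α]
    (F : Finset (Finset α)) (A : Finset α)
    (G : Finset (Finset α)) (hGF : G ⊆ F) (hGcov : ∀ a ∈ A, ∃ s ∈ G, a ∈ s) :
    ((greedyCover F A).length : ℝ) ≤ (G.card : ℝ) * (1 + Real.log A.card) := by
  rcases A.eq_empty_or_nonempty with hA | hA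
  · subst hA
    rw [greedyCover_empty]
    simp [Real.log_zero]
  · have h := greedy_aux F G hGF A.card A rfl hGcov hA
    have hGne : G.Nonempty := by
      obtain ⟨a, ha⟩ := hA
      obtain ⟨t, htG, -⟩ := hGcov a ha
      exact ⟨t, htG⟩
    have hk1 : (1 : ℝ) ≤ G.card := by exact_mod_cast Finset.card_pos.mpr hGne
    have hm1 : (1 : ℝ) ≤ A.card := by exact_mod_cast Finset.card_pos.mpr hA
    have hlog : 0 ≤ Real.log A.card := Real.log_nonneg hm1
    nlinarith
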